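/- Let m = (m₁,m₂) ∈ ℕ² and γ ∈ ℤ² with γ₁ ≡ γ₂ (mod 2). If the discrete integral ∫χ^{(m)}_γ dw = Σ_{i ∈ I^{(m)}} w^{(m)}_i χ^{(m)}_γ(i) is nonzero, then there exist h₁,h₂ ∈ ℤ with γ₁ = 2h₁m₁, γ₂ = 2h₂m₂ and h₁ + h₂ even. Conversely, if such h₁,h₂ exist, then Σ_{i ∈ I^{(m)}} w^{(m)}_i χ^{(m)}_γ(i) = 1. -/

import Mathlib

noncomputable section

/-- The rhodonea curve `ρ^{(m)}_α`. -/
def rho (m₁ m₂ : ℕ) (α : ℝ) (t : ℝ) : ℝ × ℝ :=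
  (Real.cos (m₂ * t) * Real.cos (m₁ * t - α * Real.pi),
   Real.cos (m₂ * t) * Real.sin (m₁ * t - α * Real.pi))

/-- The sampling parameters `t^{(m)}_l = l π / (2 m₁ m₂)`. -/
def tSample (m₁ m₂ : ℕ) (l : ℕ) : ℝ := l * Real.pi / (2 * m₁ * m₂)

/-- The set `S^{(m)}(t)` of parameters in `[0, 2π)` hitting the same point as `t`. -/
def Sset (m₁ m₂ : ℕ) (α t : ℝ) : Set ℝ :=
  {s | s ∈ Set.Ico (0 : ℝ) (2 * Real.pi) ∧ rho m₁ m₂ α s = rho m₁ m₂ α t}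

/-- The sample point set `LS^{(m)}_α` along the rhodonea curve. -/
def LSa (m₁ m₂ : ℕ) (α : ℝ) : Set (ℝ × ℝ) :=
  {p | ∃ l : ℕ, l < 4 * m₁ * m₂ ∧ p = rho m₁ m₂ α (tSample m₁ m₂ l)}

/-- The nodal index set `I^{(m)}` as a set. -/
def Idx (m₁ m₂ : ℕ) : Set (ℤ × ℤ) :=
  {i | 0 ≤ i.1 ∧ i.1 ≤ (m₁ : ℤ) ∧ -(2 * (m₂ : ℤ)) < i.2 ∧ i.2 ≤ 2 * (m₂ : ℤ) ∧
       (i.1 = (m₁ : ℤ) → i.2 ≤ 0) ∧ Even (i.1 + i.2)}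

/-- The nodal index set `I^{(m)}` as a finset. -/
def IdxF (m₁ m₂ : ℕ) : Finset (ℤ × ℤ) :=
  (Finset.Icc (0 : ℤ) (m₁ : ℤ) ×ˢ Finset.Ioc (-(2 * (m₂ : ℤ))) (2 * (m₂ : ℤ))).filter
    (fun i => (i.1 = (m₁ : ℤ) → i.2 ≤ 0) ∧ Even (i.1 + i.2))

/-- Radial coordinate `r^{(m₁)}_{i₁} = cos(i₁ π / (2 m₁))`. -/
def rI (m₁ : ℕ) (i₁ : ℤ) : ℝ := Real.cos (i₁ * Real.pi / (2 * m₁))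

/-- Angular coordinate `θ^{(m₂)}_{i₂} = i₂ π / (2 m₂)`. -/
def thetaI (m₂ : ℕ) (i₂ : ℤ) : ℝ := i₂ * Real.pi / (2 * m₂)

/-- The rhodonea node `x^{(m)}_i` in Cartesian coordinates. -/
def node (m₁ m₂ : ℕ) (i : ℤ × ℤ) : ℝ × ℝ :=
  (rI m₁ i.1 * Real.cos (thetaI m₂ i.2), rI m₁ i.1 * Real.sin (thetaI m₂ i.2))

/-- The rhodonea node set `LS^{(m)}`. -/
def LS (m₁ m₂ : ℕ) : Set (ℝ × ℝ) := node m₁ m₂ '' Idx m₁ m₂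

/-- Chebyshev polynomial of the first kind, `T_n(r) = cos(n arccos r)`. -/
def chebT (n : ℕ) (r : ℝ) : ℝ := Real.cos (n * Real.arccos r)

/-- The closed unit disk `𝔻 ⊆ ℝ²`. -/
def closedDisk : Set (ℝ × ℝ) := {x | x.1 ^ 2 + x.2 ^ 2 ≤ 1}

/-- The weights `w^{(m)}_i`. -/
def wgt (m₁ m₂ : ℕ) (i : ℤ × ℤ) : ℝ :=
  if i.1 = 0 then 1 / (4 * m₁ * m₂) else 2 / (4 * m₁ * m₂)

/-- The discrete basis functions `χ^{(m)}_γ(i)`. -/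
def chi (m₁ m₂ : ℕ) (γ i : ℤ × ℤ) : ℂ :=
  (Real.cos (γ.1 * i.1 * Real.pi / (2 * m₁)) : ℂ) *
    Complex.exp (Complex.I * (γ.2 * i.2 * Real.pi / (2 * m₂)))

/-- The discrete inner product `⟨f, g⟩_w` on `L(I^{(m)})`. -/
def innerW (m₁ m₂ : ℕ) (f g : ℤ × ℤ → ℂ) : ℂ :=
  ∑ i ∈ IdxF m₁ m₂, (wgt m₁ m₂ i : ℂ) * f i * (starRingEnd ℂ) (g i)

/-- The rectangular spectral index set `Γ^{(m)}_□`. -/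
def GammaSq (m₁ m₂ : ℕ) : Finset (ℤ × ℤ) :=
  (Finset.Icc (0 : ℤ) (2 * (m₁ : ℤ)) ×ˢ Finset.Ioc (-(m₂ : ℤ)) (m₂ : ℤ)).filter
    (fun γ => Even (γ.1 + γ.2))

/-- The full frequency box `K^{(m)}`. -/
def KSet (m₁ m₂ : ℕ) : Finset (ℤ × ℤ) :=
  Finset.Icc (0 : ℤ) (2 * (m₁ : ℤ)) ×ˢ Finset.Ioc (-(2 * (m₂ : ℤ))) (2 * (m₂ : ℤ))

/-- The flip (glide-reflection) operator `γ ↦ γ*` on `K^{(m)}`, with second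
coordinate `(γ₂ + 2m₂) mod 4m₂` taken in `(-2m₂, 2m₂]`. -/
def flipOp (m₁ m₂ : ℕ) (γ : ℤ × ℤ) : ℤ × ℤ :=
  (2 * (m₁ : ℤ) - γ.1, if γ.2 ≤ 0 then γ.2 + 2 * (m₂ : ℤ) else γ.2 - 2 * (m₂ : ℤ))

/-- `Γ` is a spectral index set for `I^{(m)}`: a subset of `K^{(m)}` satisfying the
parity condition whose functions `χ^{(m)}_γ` form an orthogonal basis of `L(I^{(m)})`. -/
def IsSpectral (m₁ m₂ : ℕ) (Γ : Finset (ℤ × ℤ)) : Prop :=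
  Γ ⊆ KSet m₁ m₂ ∧ (∀ γ ∈ Γ, Even (γ.1 + γ.2)) ∧
  (∀ γ ∈ Γ, ∀ γ' ∈ Γ, γ ≠ γ' → innerW m₁ m₂ (chi m₁ m₂ γ) (chi m₁ m₂ γ') = 0) ∧
  LinearIndependent ℂ (fun γ : ↥Γ => fun i : ↥(IdxF m₁ m₂) => chi m₁ m₂ γ.1 i.1) ∧
  Submodule.span ℂ
    (Set.range (fun γ : ↥Γ => fun i : ↥(IdxF m₁ m₂) => chi m₁ m₂ γ.1 i.1)) = ⊤

/-- The real discrete basis functions `χ^{(m)}_{ℛ,γ}(i)` (for `γ ∈ Γ`). -/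
def chiR (m₁ m₂ : ℕ) (Γ : Finset (ℤ × ℤ)) (γ i : ℤ × ℤ) : ℝ :=
  Real.cos (γ.1 * i.1 * Real.pi / (2 * m₁)) *
    (if ((γ.1, -γ.2) ∈ Γ ∧ 0 ≤ γ.2) ∨ ((γ.1, -γ.2) ∉ Γ ∧ γ.1 ≤ (m₁ : ℤ))
     then Real.cos (γ.2 * i.2 * Real.pi / (2 * m₂))
     else Real.sin (γ.2 * i.2 * Real.pi / (2 * m₂)))

/-- The Chebyshev–Fourier basis functions `X_γ(r, θ) = T_{γ₁}(r) e^{i γ₂ θ}`. -/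
def Xfun (γ : ℤ × ℤ) (p : ℝ × ℝ) : ℂ :=
  (Real.cos (γ.1 * Real.arccos p.1) : ℂ) * Complex.exp (Complex.I * (γ.2 * p.2))

/-- The real Chebyshev–Fourier basis functions `X_{ℛ,γ}` (for `γ ∈ Γ`). -/
def XRfun (m₁ : ℕ) (Γ : Finset (ℤ × ℤ)) (γ : ℤ × ℤ) (p : ℝ × ℝ) : ℝ :=
  Real.cos (γ.1 * Real.arccos p.1) *
    (if ((γ.1, -γ.2) ∈ Γ ∧ 0 ≤ γ.2) ∨ ((γ.1, -γ.2) ∉ Γ ∧ γ.1 ≤ (m₁ : ℤ))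
     then Real.cos (γ.2 * p.2) else Real.sin (γ.2 * p.2))

/-- The Lagrange functions `L^{(m)}_i`. -/
def Lag (m₁ m₂ : ℕ) (Γ : Finset (ℤ × ℤ)) (i : ℤ × ℤ) (p : ℝ × ℝ) : ℂ :=
  (wgt m₁ m₂ i : ℂ) *
    ∑ γ ∈ Γ, ((starRingEnd ℂ) (chi m₁ m₂ γ i) /
      innerW m₁ m₂ (chi m₁ m₂ γ) (chi m₁ m₂ γ)) * Xfun γ p

/-- The complex-valued version of `X_{ℛ,γ}`. -/
def XRc (m₁ : ℕ) (Γ : Finset (ℤ × ℤ)) (γ : ℤ × ℤ) (p : ℝ × ℝ) : ℂ :=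
  (XRfun m₁ Γ γ p : ℂ)

/-- The real Lagrange functions `L^{(m)}_{ℛ,i}`. -/
def LagR (m₁ m₂ : ℕ) (Γ : Finset (ℤ × ℤ)) (i : ℤ × ℤ) (p : ℝ × ℝ) : ℂ :=
  (wgt m₁ m₂ i : ℂ) *
    ∑ γ ∈ Γ, ((chiR m₁ m₂ Γ γ i /
        (∑ j ∈ IdxF m₁ m₂, wgt m₁ m₂ j * chiR m₁ m₂ Γ γ j ^ 2) : ℝ) : ℂ) * XRc m₁ Γ γ p

end


section DICAux
open Finset Complex

noncomputable def XXD (m₂ : ℕ) (g2 : ℤ) : ℂ :=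
  Complex.exp ((g2:ℂ) * Real.pi / (2*m₂) * Complex.I)
noncomputable def YYD (m₁ : ℕ) (g1 : ℤ) : ℂ :=
  Complex.exp ((g1:ℂ) * Real.pi / (2*m₁) * Complex.I)

private lemma sum_Icc_int (n : ℕ) (f : ℤ → ℂ) :
    ∑ i ∈ Finset.Icc (0:ℤ) (n:ℤ), f i = ∑ k ∈ Finset.range (n+1), f (k:ℤ) := by
  refine Finset.sum_bij' (fun i _ => i.toNat) (fun k _ => (k:ℤ)) ?_ ?_ ?_ ?_ ?_
  all_goals intro a ha
  · simp only [Finset.mem_Icc] at ha; simp only [Finset.mem_range]; omega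
  · simp only [Finset.mem_range] at ha; simp only [Finset.mem_Icc]; omega
  · simp only [Finset.mem_Icc] at ha; omega
  · simp only [Finset.mem_range] at ha; omega
  · simp only [Finset.mem_Icc] at ha; simp only [Int.toNat_of_nonneg ha.1]

private lemma aux_T (m₁ : ℕ) (hm₁ : 0 < m₁) (c u : ℂ) :
    ∑ i ∈ Finset.Icc (0:ℤ) (m₁:ℤ), (if i = 0 ∨ i = (m₁:ℤ) then c else 2*c) * u ^ i
      = c * ((1+u) * ∑ k ∈ Finset.range m₁, u^k) := by
  rw [sum_Icc_int]
  have h0 : (0:ℕ) ∈ Finset.range (m₁+1) := by simp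
  have h1 : m₁ ∈ Finset.range (m₁+1) := by simp
  have key : ∀ k ∈ Finset.range (m₁+1),
      (if (k:ℤ) = 0 ∨ (k:ℤ) = (m₁:ℤ) then c else 2*c) * u ^ (k:ℤ)
        = 2*c*u^k - (if k = 0 then c*u^k else 0) - (if k = m₁ then c*u^k else 0) := by
    intro k _
    rw [zpow_natCast]
    by_cases hk0 : k = 0
    · subst hk0; simp [hm₁.ne]; ring
    · by_cases hk1 : k = m₁
      · subst hk1
        have c0 : ¬ ((k:ℤ) = 0) := by exact_mod_cast hk0
        simp [c0, hk0]; ring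
      · have c0 : ¬ ((k:ℤ) = 0) := by exact_mod_cast hk0
        have c1 : ¬ ((k:ℤ) = (m₁:ℤ)) := by exact_mod_cast hk1
        simp [c0, c1, hk0, hk1]
  rw [Finset.sum_congr rfl key, Finset.sum_sub_distrib, Finset.sum_sub_distrib,
    Finset.sum_ite_eq' _ 0, Finset.sum_ite_eq' _ m₁, if_pos h0, if_pos h1,
    ← Finset.mul_sum, Finset.sum_range_succ]
  linear_combination (-c) * geom_sum_mul u m₁

private lemma aux_trap (m₁ : ℕ) (hm₁ : 0 < m₁) (c u : ℂ) (hu0 : u ≠ 0)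
    (hu : u ^ m₁ * u ^ m₁ = 1) :
    (∑ i ∈ Finset.Icc (0:ℤ) (m₁:ℤ), (if i = 0 ∨ i = (m₁:ℤ) then c else 2*c) * u ^ i)
      + (∑ i ∈ Finset.Icc (0:ℤ) (m₁:ℤ), (if i = 0 ∨ i = (m₁:ℤ) then c else 2*c) * u⁻¹ ^ i)
      = if u = 1 then 4*m₁*c else 0 := by
  rw [aux_T m₁ hm₁ c u, aux_T m₁ hm₁ c u⁻¹]
  by_cases hu1 : u = 1
  · subst hu1
    simp only [inv_one, one_pow, Finset.sum_const, Finset.card_range, nsmul_eq_mul, mul_one,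
      if_pos trivial, if_pos rfl]
    ring
  · rw [if_neg hu1]
    have hui1 : u⁻¹ ≠ 1 := fun h => hu1 (by rw [← inv_inv u, h, inv_one])
    rw [geom_sum_eq hu1, geom_sum_eq hui1, inv_pow]
    have hw : (u ^ m₁)⁻¹ = u ^ m₁ := inv_eq_of_mul_eq_one_right hu
    rw [hw]
    have hu1' : u - 1 ≠ 0 := sub_ne_zero.mpr hu1
    have hui1' : u⁻¹ - 1 ≠ 0 := sub_ne_zero.mpr hui1
    have key : (1+u⁻¹)/(u⁻¹-1) = (-(1+u))/(u-1) := by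
      rw [div_eq_div_iff hui1' hu1']
      field_simp
      ring
    have swap : ∀ a b d : ℂ, a*(b/d) = (a/d)*b := by intros; ring
    rw [swap, swap, key]
    ring

private lemma innerSumAux (m₂ : ℕ) (x : ℂ) (hx : x ≠ 0) (a e : ℤ)
    (he1 : -(2*(m₂:ℤ)) < e) (he2 : e ≤ 2 - 2*(m₂:ℤ)) (hae : Even (a + e)) :
    ∑ b ∈ Finset.Ioc (-(2*(m₂:ℤ))) (2*(m₂:ℤ)), (if Even (a+b) then x^b else 0)
      = x ^ e * ∑ k ∈ Finset.range (2*m₂), (x^2)^k := by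
  rw [← Finset.sum_filter, Finset.mul_sum]
  refine Finset.sum_bij' (fun b _ => ((b - e)/2).toNat) (fun k _ => 2*(k:ℤ) + e) ?_ ?_ ?_ ?_ ?_
  all_goals intro b hb
  · simp only [Finset.mem_filter, Finset.mem_Ioc] at hb
    simp only [Finset.mem_range]
    obtain ⟨⟨hb1, hb2⟩, hb3⟩ := hb
    rw [Int.even_iff] at hb3 hae
    omega
  · simp only [Finset.mem_range] at hb
    simp only [Finset.mem_filter, Finset.mem_Ioc]
    rw [Int.even_iff] at hae ⊢
    omega
  · simp only [Finset.mem_filter, Finset.mem_Ioc] at hb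
    obtain ⟨⟨hb1, hb2⟩, hb3⟩ := hb
    rw [Int.even_iff] at hb3 hae
    omega
  · simp only [Finset.mem_range] at hb
    omega
  · simp only [Finset.mem_filter, Finset.mem_Ioc] at hb
    obtain ⟨⟨hb1, hb2⟩, hb3⟩ := hb
    rw [Int.even_iff] at hb3 hae
    have hbe : b = 2*(((b - e)/2).toNat : ℤ) + e := by omega
    conv_lhs => rw [hbe]
    rw [zpow_add₀ hx, mul_comm]
    congr 1
    rw [zpow_mul, zpow_natCast, zpow_two, ← pow_two]

private lemma rowAux (m₂ : ℕ) (F : ℤ → ℂ) (hF : ∀ b, F (b + 2*(m₂:ℤ)) = F b)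
    (E : ℤ → Prop) [DecidablePred E] (hE : ∀ b, E (b + 2*(m₂:ℤ)) ↔ E b) :
    ∑ b ∈ Finset.Ioc (-(2*(m₂:ℤ))) (2*(m₂:ℤ)), (if b ≤ 0 ∧ E b then 2 * F b else 0)
      = ∑ b ∈ Finset.Ioc (-(2*(m₂:ℤ))) (2*(m₂:ℤ)), (if E b then F b else 0) := by
  have hneg : -(2*(m₂:ℤ)) ≤ 0 := by omega
  have hpos : (0:ℤ) ≤ 2*(m₂:ℤ) := by omega
  have hdisj : Disjoint (Finset.Ioc (-(2*(m₂:ℤ))) 0) (Finset.Ioc 0 (2*(m₂:ℤ))) := by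
    rw [Finset.disjoint_left]
    intro b hb hb'
    rw [Finset.mem_Ioc] at hb hb'
    omega
  rw [← Finset.Ioc_union_Ioc_eq_Ioc hneg hpos, Finset.sum_union hdisj, Finset.sum_union hdisj]
  have hA2 : ∑ b ∈ Finset.Ioc (0:ℤ) (2*(m₂:ℤ)), (if b ≤ 0 ∧ E b then 2 * F b else 0) = 0 := by
    refine Finset.sum_eq_zero fun b hb => ?_
    rw [Finset.mem_Ioc] at hb
    rw [if_neg]
    rintro ⟨h, -⟩
    omega
  have hB2 : ∑ b ∈ Finset.Ioc (0:ℤ) (2*(m₂:ℤ)), (if E b then F b else 0)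
      = ∑ b ∈ Finset.Ioc (-(2*(m₂:ℤ))) 0, (if E b then F b else 0) := by
    refine Finset.sum_bij' (fun b _ => b - 2*(m₂:ℤ)) (fun b _ => b + 2*(m₂:ℤ)) ?_ ?_ ?_ ?_ ?_
    all_goals intro b hb
    · simp only [Finset.mem_Ioc] at hb ⊢; omega
    · simp only [Finset.mem_Ioc] at hb ⊢; omega
    · omega
    · omega
    · have h1 : E b ↔ E (b - 2*(m₂:ℤ)) := by
        rw [← hE (b - 2*(m₂:ℤ)), show b - 2*(m₂:ℤ) + 2*(m₂:ℤ) = b from by ring]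
      have h2 : F b = F (b - 2*(m₂:ℤ)) := by
        rw [← hF (b - 2*(m₂:ℤ)), show b - 2*(m₂:ℤ) + 2*(m₂:ℤ) = b from by ring]
      rw [if_congr h1 h2 rfl]
  rw [hA2, hB2, add_zero, ← Finset.sum_add_distrib]
  refine Finset.sum_congr rfl fun b hb => ?_
  rw [Finset.mem_Ioc] at hb
  by_cases hEb : E b
  · rw [if_pos ⟨hb.2, hEb⟩, if_pos hEb]; ring
  · rw [if_neg (fun h => hEb h.2), if_neg hEb, add_zero]

private lemma xsq_iff (m₂ : ℕ) (hm₂ : 0 < m₂) (g2 : ℤ) :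
    (XXD m₂ g2)^2 = 1 ↔ ∃ n : ℤ, g2 = 2*n*(m₂:ℤ) := by
  have hm2c : (m₂:ℂ) ≠ 0 := Nat.cast_ne_zero.mpr hm₂.ne'
  have hπ : (Real.pi:ℂ) ≠ 0 := Complex.ofReal_ne_zero.mpr Real.pi_ne_zero
  have hπI : (Real.pi:ℂ) * Complex.I ≠ 0 := mul_ne_zero hπ Complex.I_ne_zero
  unfold XXD
  rw [sq, ← Complex.exp_add, Complex.exp_eq_one_iff]
  constructor
  · rintro ⟨n, hn⟩
    refine ⟨n, ?_⟩
    have key : (g2:ℂ) * (Real.pi*Complex.I*2) = (2*n*(m₂:ℂ)) * (Real.pi*Complex.I*2) := by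
      field_simp at hn
      linear_combination (↑Real.pi * Complex.I) * hn
    have := mul_right_cancel₀ (mul_ne_zero hπI two_ne_zero) key
    exact_mod_cast this
  · rintro ⟨n, rfl⟩
    refine ⟨n, ?_⟩
    push_cast
    field_simp
    ring

private lemma bridgeD (m₁ m₂ : ℕ) (hm₁ : 0 < m₁) (hm₂ : 0 < m₂) (γ : ℤ × ℤ) :
    ((XXD m₂ γ.2)^2 = 1 ∧ XXD m₂ γ.2 * YYD m₁ γ.1 = 1)
      ↔ (∃ h₁ h₂ : ℤ, γ.1 = 2*h₁*(m₁:ℤ) ∧ γ.2 = 2*h₂*(m₂:ℤ) ∧ Even (h₁ + h₂)) := by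
  have hm1c : (m₁:ℂ) ≠ 0 := Nat.cast_ne_zero.mpr hm₁.ne'
  have hm2c : (m₂:ℂ) ≠ 0 := Nat.cast_ne_zero.mpr hm₂.ne'
  have hπ : (Real.pi:ℂ) ≠ 0 := Complex.ofReal_ne_zero.mpr Real.pi_ne_zero
  have hπI : (Real.pi:ℂ) * Complex.I ≠ 0 := mul_ne_zero hπ Complex.I_ne_zero
  constructor
  · rintro ⟨hx2, hxy⟩
    obtain ⟨n, hg2⟩ := (xsq_iff m₂ hm₂ γ.2).mp hx2
    unfold XXD YYD at hxy
    rw [← Complex.exp_add, Complex.exp_eq_one_iff] at hxy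
    obtain ⟨k, hk⟩ := hxy
    rw [hg2] at hk
    have hg1 : γ.1 = 2*(2*k-n)*(m₁:ℤ) := by
      have key : (γ.1:ℂ) * (Real.pi*Complex.I*(2*m₂))
          = (2*(2*(k:ℂ)-n)*(m₁:ℂ)) * (Real.pi*Complex.I*(2*m₂)) := by
        push_cast at hk
        field_simp at hk
        linear_combination (2*(m₂:ℂ)*Real.pi*Complex.I) * hk
      have := mul_right_cancel₀ (mul_ne_zero hπI (mul_ne_zero two_ne_zero hm2c)) key
      exact_mod_cast this
    exact ⟨2*k-n, n, hg1, hg2, ⟨k, by ring⟩⟩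
  · rintro ⟨h₁, h₂, hg1, hg2, heven⟩
    obtain ⟨k, hk⟩ := heven
    have hk' : (h₁:ℂ) + h₂ = (k:ℂ) + k := by exact_mod_cast hk
    constructor
    · exact (xsq_iff m₂ hm₂ γ.2).mpr ⟨h₂, hg2⟩
    · unfold XXD YYD
      rw [← Complex.exp_add,
        show (γ.2:ℂ) * Real.pi / (2*m₂) * Complex.I + (γ.1:ℂ) * Real.pi / (2*m₁) * Complex.I
            = (k:ℂ) * (2*Real.pi*Complex.I) from by
          rw [hg1, hg2]; push_cast; field_simp
          linear_combination hk']
      exact Complex.exp_int_mul_two_pi_mul_I k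

private lemma chi_xy (m₁ m₂ : ℕ) (γ i : ℤ × ℤ) :
    chi m₁ m₂ γ i = ((YYD m₁ γ.1 ^ i.1 + YYD m₁ γ.1 ^ (-i.1))/2) * XXD m₂ γ.2 ^ i.2 := by
  unfold chi XXD YYD
  rw [Complex.ofReal_cos, Complex.cos]
  congr 1
  · rw [← Complex.exp_int_mul _ i.1, ← Complex.exp_int_mul _ (-i.1)]
    congr 2 <;> (push_cast; ring)
  · rw [← Complex.exp_int_mul _ i.2]
    congr 1
    push_cast; ring

open Classical in
private lemma main_eval (m₁ m₂ : ℕ) (hm₁ : 0 < m₁) (hm₂ : 0 < m₂) (γ : ℤ × ℤ)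
    (hpar : γ.1 ≡ γ.2 [ZMOD 2]) :
    ∑ i ∈ IdxF m₁ m₂, (wgt m₁ m₂ i : ℂ) * chi m₁ m₂ γ i
      = if (XXD m₂ γ.2)^2 = 1 ∧ XXD m₂ γ.2 * YYD m₁ γ.1 = 1 then 1 else 0 := by
  have hp : γ.1 % 2 = γ.2 % 2 := hpar
  have hm1z : ((m₁:ℤ)) ≠ 0 := by exact_mod_cast hm₁.ne'
  have hm2z : (1:ℤ) ≤ (m₂:ℤ) := by exact_mod_cast hm₂
  have hm1c : (m₁:ℂ) ≠ 0 := Nat.cast_ne_zero.mpr hm₁.ne'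
  have hm2c : (m₂:ℂ) ≠ 0 := Nat.cast_ne_zero.mpr hm₂.ne'
  set x := XXD m₂ γ.2 with hxdef
  set y := YYD m₁ γ.1 with hydef
  have hx0 : x ≠ 0 := Complex.exp_ne_zero _
  have hy0 : y ≠ 0 := Complex.exp_ne_zero _
  set c : ℂ := (4*(m₁:ℂ)*(m₂:ℂ))⁻¹ with hcdef
  have hwgt : ∀ a b : ℤ, (wgt m₁ m₂ (a,b) : ℂ) = if a = 0 then c else 2*c := by
    intro a b
    unfold wgt
    dsimp only
    split_ifs
    · rw [hcdef]; push_cast; rw [one_div]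
    · rw [hcdef]; push_cast; rw [div_eq_mul_inv]
  have hx2m : x ^ (2*(m₂:ℤ)) = Complex.exp ((γ.2:ℂ) * Real.pi * Complex.I) := by
    rw [hxdef]
    unfold XXD
    rw [← Complex.exp_int_mul]
    congr 1
    push_cast
    field_simp
  have hyodd : Odd γ.1 → y ^ ((m₁:ℤ)) + y ^ (-(m₁:ℤ)) = 0 := by
    rintro ⟨t, ht⟩
    have h1 : y ^ ((m₁:ℤ)) = Complex.exp ((((γ.1:ℝ) * Real.pi / 2 : ℝ) : ℂ) * Complex.I) := by
      rw [hydef]; unfold YYD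
      rw [← Complex.exp_int_mul]; congr 1; push_cast; field_simp
    have h2 : y ^ (-(m₁:ℤ)) = Complex.exp (-(((γ.1:ℝ) * Real.pi / 2 : ℝ) : ℂ) * Complex.I) := by
      rw [hydef]; unfold YYD
      rw [← Complex.exp_int_mul]; congr 1; push_cast; field_simp
    have hcos : Real.cos ((γ.1:ℝ) * Real.pi / 2) = 0 := by
      rw [show ((γ.1:ℝ)) = 2*(t:ℝ)+1 from by exact_mod_cast ht,
        show ((2*(t:ℝ)+1) * Real.pi / 2) = (t:ℝ)*Real.pi + Real.pi/2 from by ring,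
        Real.cos_add, Real.cos_pi_div_two, Real.sin_pi_div_two, Real.sin_int_mul_pi]
      ring
    rw [h1, h2,
      show Complex.exp ((((γ.1:ℝ) * Real.pi / 2 : ℝ):ℂ) * Complex.I)
          + Complex.exp (-(((γ.1:ℝ) * Real.pi / 2 : ℝ):ℂ) * Complex.I)
        = 2 * Complex.cos (((γ.1:ℝ) * Real.pi / 2 : ℝ):ℂ) from by rw [Complex.cos]; try ring
        ,
      ← Complex.ofReal_cos, hcos]
    norm_num
  unfold IdxF
  rw [Finset.sum_filter, Finset.sum_product]
  have row : ∀ a ∈ Finset.Icc (0:ℤ) (m₁:ℤ),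
      (∑ b ∈ Finset.Ioc (-(2*(m₂:ℤ))) (2*(m₂:ℤ)),
        if (((a,b).1 = (m₁:ℤ) → (a,b).2 ≤ 0) ∧ Even ((a,b).1 + (a,b).2))
        then (wgt m₁ m₂ (a,b) : ℂ) * chi m₁ m₂ γ (a,b) else 0)
      = (if a = 0 ∨ a = (m₁:ℤ) then c else 2*c) * ((y ^ a + y ^ (-a))/2) *
          (x ^ (if Even a then 2 - 2*(m₂:ℤ) else 1 - 2*(m₂:ℤ))
            * ∑ k ∈ Finset.range (2*m₂), (x^2)^k) := by
    intro a ha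
    rw [Finset.mem_Icc] at ha
    have he1 : -(2*(m₂:ℤ)) < (if Even a then 2 - 2*(m₂:ℤ) else 1 - 2*(m₂:ℤ)) := by
      split_ifs <;> omega
    have he2 : (if Even a then 2 - 2*(m₂:ℤ) else 1 - 2*(m₂:ℤ)) ≤ 2 - 2*(m₂:ℤ) := by
      split_ifs <;> omega
    have hae : Even (a + (if Even a then 2 - 2*(m₂:ℤ) else 1 - 2*(m₂:ℤ))) := by
      rcases Int.even_or_odd a with h | h
      · rw [if_pos h]; rw [Int.even_iff] at h ⊢; omega
      · rw [if_neg (by rwa [← Int.not_even_iff_odd] at h)]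
        rw [Int.odd_iff] at h; rw [Int.even_iff]; omega
    rw [← innerSumAux m₂ x hx0 a _ he1 he2 hae, Finset.mul_sum]
    by_cases ham : a = (m₁:ℤ)
    · subst ham
      have hKper : ∀ b:ℤ, (c * (((y ^ ((m₁:ℤ)) + y ^ (-((m₁:ℤ))))/2) * x ^ (b + 2*(m₂:ℤ))))
          = c * (((y ^ ((m₁:ℤ)) + y ^ (-((m₁:ℤ))))/2) * x ^ b) := by
        intro b
        rcases Int.even_or_odd γ.2 with h2 | h2
        · obtain ⟨t, ht⟩ := h2
          have hg2c : (γ.2:ℂ) = (t:ℂ) + t := by exact_mod_cast ht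
          have hxx : x^(2*(m₂:ℤ)) = 1 := by
            rw [hx2m, show ((γ.2:ℂ) * (Real.pi:ℂ) * Complex.I) = (t:ℂ)*(2*(Real.pi:ℂ)*Complex.I)
              from by rw [hg2c]; ring, Complex.exp_int_mul_two_pi_mul_I]
          rw [zpow_add₀ hx0, hxx, mul_one]
        · have h1 : Odd γ.1 := by rw [Int.odd_iff] at h2 ⊢; omega
          rw [hyodd h1]
          ring
      have step1 : (∑ b ∈ Finset.Ioc (-(2*(m₂:ℤ))) (2*(m₂:ℤ)),
          if ((((m₁:ℤ),b).1 = (m₁:ℤ) → ((m₁:ℤ),b).2 ≤ 0)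
              ∧ Even (((m₁:ℤ),b).1 + ((m₁:ℤ),b).2))
          then (wgt m₁ m₂ ((m₁:ℤ),b) : ℂ) * chi m₁ m₂ γ ((m₁:ℤ),b) else 0)
          = ∑ b ∈ Finset.Ioc (-(2*(m₂:ℤ))) (2*(m₂:ℤ)),
            (if b ≤ 0 ∧ Even ((m₁:ℤ) + b)
              then 2 * (c * (((y ^ ((m₁:ℤ)) + y ^ (-((m₁:ℤ))))/2) * x ^ b)) else 0) := by
        refine Finset.sum_congr rfl fun b hb => ?_
        rw [hwgt, chi_xy]
        dsimp only
        rw [if_congr (show (((m₁:ℤ) = (m₁:ℤ) → b ≤ 0) ∧ Even ((m₁:ℤ) + b))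
              ↔ (b ≤ 0 ∧ Even ((m₁:ℤ)+b)) from by simp) rfl rfl,
          if_neg hm1z]
        split_ifs with h <;> ring
      refine step1.trans ?_
      refine (rowAux m₂ _ hKper (fun b => Even ((m₁:ℤ) + b)) (fun b => by
        simp only [Int.even_iff]; omega)).trans ?_
      refine Finset.sum_congr rfl fun b hb => ?_
      rw [if_pos (Or.inr rfl)]
      split_ifs with h <;> ring
    · refine Finset.sum_congr rfl fun b hb => ?_
      rw [hwgt, chi_xy]
      dsimp only
      rw [if_congr (show ((a = (m₁:ℤ) → b ≤ 0) ∧ Even (a + b)) ↔ Even (a+b) from by simp [ham])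
        rfl rfl,
        show (if a = 0 ∨ a = (m₁:ℤ) then c else 2*c) = (if a = 0 then c else 2*c) from by
          simp [ham]]
      split_ifs with h <;> ring
  refine (Finset.sum_congr rfl row).trans ?_
  by_cases hX : x^2 = 1
  · have hG : (∑ k ∈ Finset.range (2*m₂), (x^2)^k) = 2*(m₂:ℂ) := by
      simp only [hX, one_pow, Finset.sum_const, Finset.card_range, nsmul_eq_mul, mul_one]
      push_cast
      ring
    obtain ⟨n, hg2⟩ := (xsq_iff m₂ hm₂ γ.2).mp hX
    have hg2e : Even γ.2 := ⟨n*(m₂:ℤ), by rw [hg2]; ring⟩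
    have hg1e : Even γ.1 := by rw [Int.even_iff] at hg2e ⊢; omega
    have hy2m : y^(2*m₁) = 1 := by
      obtain ⟨t, ht⟩ := hg1e
      have hg1c : (γ.1:ℂ) = (t:ℂ)+t := by exact_mod_cast ht
      rw [hydef]; unfold YYD
      rw [← Complex.exp_nat_mul,
        show ((2*m₁:ℕ):ℂ) * ((γ.1:ℂ)*(Real.pi:ℂ)/(2*(m₁:ℂ))*Complex.I)
            = (t:ℂ)*(2*(Real.pi:ℂ)*Complex.I) from by
          rw [hg1c]; push_cast; field_simp; ring]
      exact Complex.exp_int_mul_two_pi_mul_I t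
    have hx2' : x ^ ((2:ℤ)) = 1 := by rw [zpow_two, ← pow_two]; exact hX
    have hxe : ∀ n:ℤ, Even n → x^n = 1 := by
      rintro n ⟨t, rfl⟩
      rw [show t + t = 2*t from by ring, zpow_mul, hx2', one_zpow]
    have hxneg : ∀ a:ℤ, x^(-a) = x^a := by
      intro a
      rw [show -a = a + (-2*a) from by ring, zpow_add₀ hx0, hxe (-2*a) ⟨-a, by ring⟩, mul_one]
    have hx2m₁ : x^(2*m₁) = 1 := by rw [pow_mul, hX, one_pow]
    have huu : (x*y)^m₁ * (x*y)^m₁ = 1 := by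
      rw [← pow_add, mul_pow, show m₁ + m₁ = 2*m₁ from (two_mul m₁).symm, hx2m₁, hy2m, one_mul]
    have hu0 : x*y ≠ 0 := mul_ne_zero hx0 hy0
    have mainterm : ∀ a ∈ Finset.Icc (0:ℤ) (m₁:ℤ),
        (if a = 0 ∨ a = (m₁:ℤ) then c else 2*c) * ((y ^ a + y ^ (-a))/2) *
            (x ^ (if Even a then 2 - 2*(m₂:ℤ) else 1 - 2*(m₂:ℤ))
              * ∑ k ∈ Finset.range (2*m₂), (x^2)^k)
          = (m₂:ℂ) * ((if a = 0 ∨ a = (m₁:ℤ) then c else 2*c) * (x*y) ^ a)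
            + (m₂:ℂ) * ((if a = 0 ∨ a = (m₁:ℤ) then c else 2*c) * ((x*y)⁻¹) ^ a) := by
      intro a _
      have hxea : x ^ (if Even a then 2 - 2*(m₂:ℤ) else 1 - 2*(m₂:ℤ)) = x^a := by
        rcases Int.even_or_odd a with h | h
        · rw [if_pos h, hxe _ ⟨1 - (m₂:ℤ), by ring⟩, hxe a h]
        · rw [if_neg (by rwa [← Int.not_even_iff_odd] at h),
            show (1 - 2*(m₂:ℤ)) = a + (1 - 2*(m₂:ℤ) - a) from by ring,
            zpow_add₀ hx0, hxe (1 - 2*(m₂:ℤ) - a) ?_, mul_one]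
          rw [Int.odd_iff] at h; rw [Int.even_iff]; omega
      rw [hxea, hG, mul_zpow, mul_inv, mul_zpow, inv_zpow, inv_zpow, ← zpow_neg, ← zpow_neg,
        hxneg]
      ring
    rw [Finset.sum_congr rfl mainterm, Finset.sum_add_distrib, ← Finset.mul_sum, ← Finset.mul_sum,
      ← mul_add, aux_trap m₁ hm₁ c (x*y) hu0 huu]
    by_cases hu1 : x*y = 1
    · rw [if_pos hu1, if_pos ⟨hX, hu1⟩, hcdef]
      field_simp
    · rw [if_neg hu1, mul_zero, if_neg (fun h => hu1 h.2)]
  · have hG0 : (∑ k ∈ Finset.range (2*m₂), (x^2)^k) = 0 := by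
      rw [geom_sum_eq hX (2*m₂)]
      have hx4 : (x^2)^(2*m₂) = 1 := by
        rw [← pow_mul, hxdef]
        unfold XXD
        rw [← Complex.exp_nat_mul,
          show ((2*(2*m₂):ℕ):ℂ) * ((γ.2:ℂ)*(Real.pi:ℂ)/(2*(m₂:ℂ))*Complex.I)
              = (γ.2:ℂ)*(2*(Real.pi:ℂ)*Complex.I) from by push_cast; field_simp]
        exact Complex.exp_int_mul_two_pi_mul_I γ.2
      rw [hx4, sub_self, zero_div]
    simp only [hG0, mul_zero, Finset.sum_const_zero]
    rw [if_neg (fun h => hX h.1)]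

end DICAux

/-- Proposition 9.3: the discrete integral `∫ χ^{(m)}_γ dw` is nonzero only if
`γ₁ = 2h₁m₁`, `γ₂ = 2h₂m₂` with `h₁ + h₂` even, in which case it equals `1`. -/
theorem discrete_integral_chi (m₁ m₂ : ℕ) (hm₁ : 0 < m₁) (hm₂ : 0 < m₂)
    (γ : ℤ × ℤ) (hpar : γ.1 ≡ γ.2 [ZMOD 2]) :
    ((∑ i ∈ IdxF m₁ m₂, (wgt m₁ m₂ i : ℂ) * chi m₁ m₂ γ i) ≠ 0 →
      ∃ h₁ h₂ : ℤ, γ.1 = 2 * h₁ * m₁ ∧ γ.2 = 2 * h₂ * m₂ ∧ Even (h₁ + h₂)) ∧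
    ((∃ h₁ h₂ : ℤ, γ.1 = 2 * h₁ * m₁ ∧ γ.2 = 2 * h₂ * m₂ ∧ Even (h₁ + h₂)) →
      (∑ i ∈ IdxF m₁ m₂, (wgt m₁ m₂ i : ℂ) * chi m₁ m₂ γ i) = 1) := by
  have hmain := main_eval m₁ m₂ hm₁ hm₂ γ hpar
  have hbr := bridgeD m₁ m₂ hm₁ hm₂ γ
  constructor
  · intro hS
    by_cases h : (XXD m₂ γ.2)^2 = 1 ∧ XXD m₂ γ.2 * YYD m₁ γ.1 = 1
    · exact hbr.mp h
    · rw [hmain, if_neg h] at hS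
      exact absurd rfl hS
  · intro hE
    rw [hmain, if_pos (hbr.mpr hE)]
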